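/- Let A be an N×N rate matrix and let α ≥ 1. Define for each i the driver component e_iᵀ f(z) := min_{r ∈ [1/α, α]} r (zᵀ A e_i). Then for all z, z' ∈ ℝ^N, |e_iᵀ f(z) − e_iᵀ f(z')| ≤ α |(z − z')ᵀ A e_i|, and |(z−z')ᵀ A e_i|² ≤ (∑_{k≠i} A_{ki}) · (z−z')ᵀ Ψ(A, e_i) (z−z'). -/

import Mathlib

open Matrix

/-- Ψ(A, x) = diag(Ax) − A diag(x) − diag(x) Aᵀ. -/
def Psi {N : ℕ} (A : Matrix (Fin N) (Fin N) ℝ) (x : Fin N → ℝ) :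
    Matrix (Fin N) (Fin N) ℝ :=
  Matrix.diagonal (A *ᵥ x) - A * Matrix.diagonal x - Matrix.diagonal x * Aᵀ

theorem stmt_16 {N : ℕ} (A : Matrix (Fin N) (Fin N) ℝ)
    (hoff : ∀ i j, i ≠ j → 0 ≤ A i j) (hcol : ∀ j, ∑ i, A i j = 0)
    (α : ℝ) (hα : 1 ≤ α) (i : Fin N)
    (f : (Fin N → ℝ) → ℝ)
    (hf : f = fun z => ⨅ r : Set.Icc (α⁻¹) α, (r : ℝ) * (z ⬝ᵥ (A *ᵥ Pi.single i 1)))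
    (z z' : Fin N → ℝ) :
    |f z - f z'| ≤ α * |(z - z') ⬝ᵥ (A *ᵥ Pi.single i 1)| ∧
    |(z - z') ⬝ᵥ (A *ᵥ Pi.single i 1)| ^ 2 ≤
      (∑ k ∈ Finset.univ.erase i, A k i) *
        ((z - z') ⬝ᵥ (Psi A (Pi.single i 1) *ᵥ (z - z'))) := by
  have hα0 : (0:ℝ) < α := lt_of_lt_of_le one_pos hα
  have hinv0 : (0:ℝ) < α⁻¹ := inv_pos.mpr hα0
  have hinvle : α⁻¹ ≤ α := by
    nlinarith [mul_inv_cancel₀ (ne_of_gt hα0), inv_pos.mpr hα0]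
  have hfval : ∀ y : Fin N → ℝ,
      f y = min (α⁻¹ * (y ⬝ᵥ (A *ᵥ Pi.single i 1))) (α * (y ⬝ᵥ (A *ᵥ Pi.single i 1))) := by
    intro y
    rw [hf]
    set s := y ⬝ᵥ (A *ᵥ Pi.single i 1) with hs
    have hbdd : BddBelow (Set.range fun r : Set.Icc (α⁻¹) α => (r:ℝ) * s) := by
      refine ⟨-(α * |s|), ?_⟩
      rintro x ⟨⟨r, hr1, hr2⟩, rfl⟩
      simp only
      have habs : |r * s| ≤ α * |s| := by
        rw [abs_mul]
        apply mul_le_mul_of_nonneg_right _ (abs_nonneg s)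
        rw [abs_of_nonneg (le_of_lt (lt_of_lt_of_le hinv0 hr1))]; exact hr2
      linarith [neg_abs_le (r * s)]
    apply le_antisymm
    · apply le_min
      · exact ciInf_le hbdd ⟨α⁻¹, le_refl _, hinvle⟩
      · exact ciInf_le hbdd ⟨α, hinvle, le_refl _⟩
    · haveI : Nonempty (Set.Icc (α⁻¹) α) := ⟨⟨α, hinvle, le_refl _⟩⟩
      apply le_ciInf
      rintro ⟨r, hr1, hr2⟩
      simp only
      rcases le_or_gt 0 s with hs0 | hs0
      · exact le_trans (min_le_left _ _) (mul_le_mul_of_nonneg_right hr1 hs0)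
      · exact le_trans (min_le_right _ _) (by nlinarith)
  have hds : (z - z') ⬝ᵥ (A *ᵥ Pi.single i 1)
      = z ⬝ᵥ (A *ᵥ Pi.single i 1) - z' ⬝ᵥ (A *ᵥ Pi.single i 1) :=
    sub_dotProduct _ _ _
  constructor
  · rw [hfval z, hfval z', hds]
    set s1 := z ⬝ᵥ (A *ᵥ Pi.single i 1)
    set s2 := z' ⬝ᵥ (A *ᵥ Pi.single i 1)
    refine le_trans (abs_min_sub_min_le_max _ _ _ _) (max_le ?_ ?_)
    · rw [← mul_sub, abs_mul, abs_of_pos hinv0]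
      exact mul_le_mul_of_nonneg_right hinvle (abs_nonneg _)
    · rw [← mul_sub, abs_mul, abs_of_pos hα0]
  · set w := z - z' with hw
    have hsum0 : ∑ k, A k i = 0 := hcol i
    -- dot product in sum form
    have hSsum : w ⬝ᵥ (A *ᵥ Pi.single i 1) = ∑ k, A k i * w k := by
      rw [Matrix.mulVec_single]
      simp only [dotProduct, Pi.smul_apply, op_smul_eq_mul, Matrix.col_apply, mul_one]
      exact Finset.sum_congr rfl fun k _ => by ring
    have hS : w ⬝ᵥ (A *ᵥ Pi.single i 1) = ∑ k ∈ Finset.univ.erase i, A k i * (w k - w i) := by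
      rw [Finset.sum_erase_eq_sub (Finset.mem_univ i), sub_self, mul_zero, sub_zero]
      have h1 : ∑ k, A k i * (w k - w i) = (∑ k, A k i * w k) - (∑ k, A k i) * w i := by
        rw [Finset.sum_mul, ← Finset.sum_sub_distrib]
        exact Finset.sum_congr rfl fun k _ => by ring
      rw [h1, hsum0, zero_mul, sub_zero, hSsum]
    -- Psi mulVec pointwise
    have hdiagv : Matrix.diagonal (Pi.single i 1 : Fin N → ℝ) *ᵥ w = Pi.single i (w i) := by
      funext k
      rw [Matrix.mulVec_diagonal]
      by_cases hk : k = i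
      · subst hk; simp
      · simp [Pi.single_apply, hk]
    have hPsiv : ∀ k, (Psi A (Pi.single i 1) *ᵥ w) k
        = A k i * w k - A k i * w i
          - (Pi.single i 1 : Fin N → ℝ) k * (Aᵀ *ᵥ w) k := by
      intro k
      rw [Psi, Matrix.sub_mulVec, Matrix.sub_mulVec, ← Matrix.mulVec_mulVec,
        ← Matrix.mulVec_mulVec, hdiagv]
      simp only [Pi.sub_apply, Matrix.mulVec_diagonal, Matrix.mulVec_single, Pi.smul_apply, op_smul_eq_mul, Matrix.col_apply, mul_one]
    have hQ : w ⬝ᵥ (Psi A (Pi.single i 1) *ᵥ w)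
        = (∑ k, A k i * w k ^ 2) - 2 * w i * (∑ k, A k i * w k) := by
      have : w ⬝ᵥ (Psi A (Pi.single i 1) *ᵥ w)
          = ∑ k, (w k * (A k i * w k) - w k * (A k i * w i)
              - w k * ((Pi.single i 1 : Fin N → ℝ) k * (Aᵀ *ᵥ w) k)) := by
        simp only [dotProduct]
        exact Finset.sum_congr rfl fun k _ => by rw [hPsiv k]; ring
      rw [this]
      rw [Finset.sum_sub_distrib, Finset.sum_sub_distrib]
      have h3 : ∑ k, w k * ((Pi.single i 1 : Fin N → ℝ) k * (Aᵀ *ᵥ w) k)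
          = w i * ∑ j, A j i * w j := by
        rw [Finset.sum_eq_single i]
        · simp [Matrix.mulVec, dotProduct, Matrix.transpose_apply]
        · intro k _ hk; simp [Pi.single_apply, hk]
        · intro h; exact absurd (Finset.mem_univ i) h
      have h1 : ∑ k, w k * (A k i * w k) = ∑ k, A k i * w k ^ 2 :=
        Finset.sum_congr rfl fun k _ => by ring
      have h2 : ∑ k, w k * (A k i * w i) = w i * ∑ k, A k i * w k := by
        rw [Finset.mul_sum]; exact Finset.sum_congr rfl fun k _ => by ring
      rw [h1, h2, h3]; ring
    have hQ' : w ⬝ᵥ (Psi A (Pi.single i 1) *ᵥ w)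
        = ∑ k ∈ Finset.univ.erase i, A k i * (w k - w i) ^ 2 := by
      rw [Finset.sum_erase_eq_sub (Finset.mem_univ i), sub_self]
      have hexp : ∑ k, A k i * (w k - w i) ^ 2
          = (∑ k, A k i * w k ^ 2) - 2 * w i * (∑ k, A k i * w k)
            + w i ^ 2 * (∑ k, A k i) := by
        rw [Finset.mul_sum, Finset.mul_sum, ← Finset.sum_sub_distrib, ← Finset.sum_add_distrib]
        exact Finset.sum_congr rfl fun k _ => by ring
      rw [hexp, hsum0, mul_zero, add_zero, hQ]
      simp
    -- Cauchy–Schwarz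
    rw [hS, hQ', sq_abs]
    have hcs := Finset.sum_mul_sq_le_sq_mul_sq (Finset.univ.erase i)
      (fun k => Real.sqrt (A k i)) (fun k => Real.sqrt (A k i) * (w k - w i))
    have hnn : ∀ k ∈ Finset.univ.erase i, (0:ℝ) ≤ A k i := by
      intro k hk
      exact hoff k i (Finset.ne_of_mem_erase hk)
    calc (∑ k ∈ Finset.univ.erase i, A k i * (w k - w i)) ^ 2
        = (∑ k ∈ Finset.univ.erase i,
            Real.sqrt (A k i) * (Real.sqrt (A k i) * (w k - w i))) ^ 2 := by
          congr 1
          refine Finset.sum_congr rfl fun k hk => ?_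
          rw [← mul_assoc, Real.mul_self_sqrt (hnn k hk)]
      _ ≤ (∑ k ∈ Finset.univ.erase i, Real.sqrt (A k i) ^ 2)
            * ∑ k ∈ Finset.univ.erase i, (Real.sqrt (A k i) * (w k - w i)) ^ 2 := hcs
      _ = (∑ k ∈ Finset.univ.erase i, A k i)
            * ∑ k ∈ Finset.univ.erase i, A k i * (w k - w i) ^ 2 := by
          congr 1
          · exact Finset.sum_congr rfl fun k hk => Real.sq_sqrt (hnn k hk)
          · refine Finset.sum_congr rfl fun k hk => ?_
            rw [mul_pow, Real.sq_sqrt (hnn k hk)]
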